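/- arXiv:2005.01921 — 13 statements merged into one kernel-verified Lean document; each statement's English description precedes it below -/
import Mathlib

section
/- If every system of pairwise intersecting disks in a connected graph G has a common intersection after each radius is increased by α, then for any graph power G^k (k ≥ 1), every system of pairwise intersecting disks in G^k has a common intersection after each radius is increased by ⌈α/k⌉. -/
open SimpleGraph

variable {V : Type*}

/-- `G` is `α`-weakly-Helly: every family of pairwise intersecting disks
`{D_G(v, r v) : v ∈ S}` has a common point after all radii are increased by `α`.
Two disks `D(x,p)`, `D(y,q)` intersect iff `d(x,y) ≤ p + q`. -/
def WeaklyHelly (G : SimpleGraph V) (α : ℕ) : Prop :=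
  ∀ (S : Set V) (r : V → ℕ),
    (∀ x ∈ S, ∀ y ∈ S, G.dist x y ≤ r x + r y) →
    ∃ c : V, ∀ v ∈ S, G.dist v c ≤ r v + α

/-- Eccentricity of `v` with respect to a set `M`: `max_{u ∈ M} d(v,u)`. -/
noncomputable def eccM (G : SimpleGraph V) (M : Set V) (v : V) : ℕ :=
  sSup ((G.dist v) '' M)

/-- `rad_G(M) = min_{v ∈ V} ecc^M(v)`. -/
noncomputable def radM (G : SimpleGraph V) (M : Set V) : ℕ :=
  sInf (Set.range (eccM G M))

/-- Eccentricity of a vertex. -/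
noncomputable def ecc (G : SimpleGraph V) (v : V) : ℕ :=
  sSup (Set.range (G.dist v))

/-- Radius of a graph. -/
noncomputable def grad (G : SimpleGraph V) : ℕ :=
  sInf (Set.range (ecc G))

/-- Diameter of a graph. -/
noncomputable def gdiam (G : SimpleGraph V) : ℕ :=
  sSup (Set.range (ecc G))

/-- Diameter of a set of vertices: `max_{u,v ∈ S} d(u,v)`. -/
noncomputable def diamS (G : SimpleGraph V) (S : Set V) : ℕ :=
  sSup {d | ∃ u ∈ S, ∃ v ∈ S, d = G.dist u v}

/-- `C_G^k(M) = {v : ecc^M(v) ≤ rad_G(M) + k}`. -/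
def Ck (G : SimpleGraph V) (M : Set V) (k : ℕ) : Set V :=
  {v | eccM G M v ≤ radM G M + k}

/-- Distance from a vertex to a set: `min_{s ∈ S} d(x,s)`. -/
noncomputable def distToSet (G : SimpleGraph V) (x : V) (S : Set V) : ℕ :=
  sInf ((G.dist x) '' S)

/-- The Helly-gap of `G`: the least `α` such that `G` is `α`-weakly-Helly. -/
noncomputable def hellyGap (G : SimpleGraph V) : ℕ :=
  sInf {α | WeaklyHelly G α}

/-- The k-th power of G: same vertices, adjacent iff 1 ≤ d_G(u,v) ≤ k. -/
def graphPower (G : SimpleGraph V) (k : ℕ) : SimpleGraph V where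
  Adj u v := u ≠ v ∧ G.dist u v ≤ k
  symm := by
    constructor
    intro u v h
    exact ⟨h.1.symm, by rw [SimpleGraph.dist_comm]; exact h.2⟩
  loopless := by constructor; intro v h; exact h.1 rfl


private lemma power_le (G : SimpleGraph V) {k : ℕ} (hk : 1 ≤ k) : G ≤ graphPower G k := by
  intro u v huv
  exact ⟨huv.ne, le_trans (SimpleGraph.dist_le (SimpleGraph.Walk.cons huv SimpleGraph.Walk.nil)) hk⟩

private lemma power_connected (G : SimpleGraph V) (hc : G.Connected) {k : ℕ} (hk : 1 ≤ k) :
    (graphPower G k).Connected :=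
  hc.mono (power_le G hk)

/-- d_G(u,v) ≤ k * (length of a walk in G^k). -/
private lemma dist_le_mul_walk (G : SimpleGraph V) (hc : G.Connected) (k : ℕ)
    {u v : V} (p : (graphPower G k).Walk u v) : G.dist u v ≤ k * p.length := by
  induction p with
  | nil => simp
  | cons h q ih =>
    calc G.dist _ _ ≤ G.dist _ _ + G.dist _ _ := hc.dist_triangle
      _ ≤ k + k * q.length := Nat.add_le_add h.2 ih
      _ = k * (q.length + 1) := by ring
      _ = k * (SimpleGraph.Walk.cons h q).length := by rw [SimpleGraph.Walk.length_cons]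

private lemma dist_le_mul_dist_power (G : SimpleGraph V) (hc : G.Connected) {k : ℕ}
    (hk : 1 ≤ k) (u v : V) : G.dist u v ≤ k * (graphPower G k).dist u v := by
  obtain ⟨p, hp⟩ := ((power_connected G hc hk) u v).exists_walk_length_eq_dist
  rw [← hp]; exact dist_le_mul_walk G hc k p

/-- chop off up to n steps from the front of a walk. -/
private lemma walk_chop (G : SimpleGraph V) (hc : G.Connected) :
    ∀ (n : ℕ) {u v : V} (p : G.Walk u v),
      ∃ (w : V) (q : G.Walk w v), G.dist u w ≤ n ∧ q.length ≤ p.length - n := by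
  intro n
  induction n with
  | zero => intro u v p; exact ⟨u, p, by simp, by simp⟩
  | succ n ih =>
    intro u v p
    cases p with
    | nil => exact ⟨u, SimpleGraph.Walk.nil, by simp [SimpleGraph.dist_self], by simp⟩
    | cons h q =>
      obtain ⟨w, q', hd, hl⟩ := ih q
      refine ⟨w, q', ?_, ?_⟩
      · calc G.dist u w ≤ G.dist u _ + G.dist _ w := hc.dist_triangle
          _ ≤ 1 + n := Nat.add_le_add
            (SimpleGraph.dist_le (SimpleGraph.Walk.cons h SimpleGraph.Walk.nil)) hd
          _ = n + 1 := Nat.add_comm 1 n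
      · simpa [SimpleGraph.Walk.length_cons, Nat.succ_sub_succ] using hl

private lemma dist_power_le (G : SimpleGraph V) (hc : G.Connected) {k : ℕ} (hk : 1 ≤ k) :
    ∀ (m : ℕ) (u v : V), G.dist u v ≤ m * k → (graphPower G k).dist u v ≤ m := by
  intro m
  induction m with
  | zero =>
    intro u v h
    simp only [Nat.zero_mul, Nat.le_zero] at h
    rw [(hc.dist_eq_zero_iff).mp h]
    simp [SimpleGraph.dist_self]
  | succ m ih =>
    intro u v h
    by_cases huv : u = v
    · subst huv; simp [SimpleGraph.dist_self]
    · obtain ⟨p, hp⟩ := (hc u v).exists_walk_length_eq_dist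
      obtain ⟨w, q, hd, hl⟩ := walk_chop G hc k p
      have hwv : G.dist w v ≤ m * k := by
        calc G.dist w v ≤ q.length := SimpleGraph.dist_le q
          _ ≤ p.length - k := hl
          _ ≤ (m + 1) * k - k := by
              apply Nat.sub_le_sub_right
              rw [hp]; exact h
          _ = m * k := by rw [Nat.add_mul, Nat.one_mul, Nat.add_sub_cancel]
      have h1 : (graphPower G k).dist u w ≤ 1 := by
        by_cases huw : u = w
        · subst huw; simp [SimpleGraph.dist_self]
        · exact SimpleGraph.dist_le (SimpleGraph.Walk.cons (show (graphPower G k).Adj u w from ⟨huw, hd⟩) SimpleGraph.Walk.nil)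
      calc (graphPower G k).dist u v
          ≤ (graphPower G k).dist u w + (graphPower G k).dist w v :=
            (power_connected G hc hk).dist_triangle
        _ ≤ 1 + m := Nat.add_le_add h1 (ih w v hwv)
        _ = m + 1 := Nat.add_comm 1 m

/-- If G is α-weakly-Helly then its k-th power (k ≥ 1) is ⌈α/k⌉-weakly-Helly,
where ⌈α/k⌉ = (α + k - 1) / k in natural-number arithmetic. -/
theorem weaklyHelly_power [Fintype V] (G : SimpleGraph V) (hc : G.Connected)
    (α k : ℕ) (hk : 1 ≤ k) (h : WeaklyHelly G α) :
    WeaklyHelly (graphPower G k) ((α + k - 1) / k) := by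
  intro S r hS
  obtain ⟨c, hcc⟩ := h S (fun v => k * r v) (by
    intro x hx y hy
    calc G.dist x y ≤ k * (graphPower G k).dist x y := dist_le_mul_dist_power G hc hk x y
      _ ≤ k * (r x + r y) := Nat.mul_le_mul_left k (hS x hx y hy)
      _ = k * r x + k * r y := Nat.mul_add k _ _)
  refine ⟨c, fun v hv => ?_⟩
  have hα : α ≤ ((α + k - 1) / k) * k := by
    have h1 := Nat.div_add_mod (α + k - 1) k
    have h2 : (α + k - 1) % k < k := Nat.mod_lt _ (by omega)
    have h3 : k * ((α + k - 1) / k) = (α + k - 1) - (α + k - 1) % k := by omega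
    rw [Nat.mul_comm, h3]; omega
  apply dist_power_le G hc hk
  calc G.dist v c ≤ k * r v + α := hcc v hv
    _ ≤ k * r v + ((α + k - 1) / k) * k := Nat.add_le_add_left hα _
    _ = (r v + (α + k - 1) / k) * k := by ring
end

section
/- If G is an α-weakly-Helly graph then diam(G) ≥ 2·rad(G) − 2α − 1. -/
open SimpleGraph

variable {V : Type*}

/-- If G is α-weakly-Helly then diam(G) ≥ 2 rad(G) - 2α - 1. -/
theorem diam_ge_of_weaklyHelly [Fintype V] (G : SimpleGraph V) (hc : G.Connected)
    (α : ℕ) (h : WeaklyHelly G α) :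
    2 * grad G ≤ gdiam G + 2 * α + 1 := by
  set D := gdiam G with hD
  have hdist : ∀ x y : V, G.dist x y ≤ D := by
    intro x y
    have h1 : G.dist x y ≤ ecc G x :=
      le_csSup (Set.finite_range _).bddAbove ⟨y, rfl⟩
    have h2 : ecc G x ≤ D :=
      le_csSup (Set.finite_range _).bddAbove ⟨x, rfl⟩
    omega
  obtain ⟨c, hcₖ⟩ := h Set.univ (fun _ => (D + 1) / 2) (by
    intro x _ y _
    have := hdist x y
    show G.dist x y ≤ (D + 1) / 2 + ((D + 1) / 2)
    omega)
  have : Nonempty V := hc.nonempty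
  have hecc : ecc G c ≤ (D + 1) / 2 + α := by
    apply csSup_le (Set.range_nonempty _)
    rintro d ⟨v, rfl⟩
    have := hcₖ v (Set.mem_univ v)
    rwa [G.dist_comm]
  have hrad : grad G ≤ ecc G c := Nat.sInf_le ⟨c, rfl⟩
  omega
end

section
/- Let G be an α-weakly-Helly graph, M ⊆ V(G), and v a vertex with e_G^M(v) > rad_G(M) + α. Then there exists a vertex u with d_G(v,u) ≤ 2α+1 and e_G^M(u) < e_G^M(v). -/
open SimpleGraph

variable {V : Type*}

/-- In an α-weakly-Helly graph, any vertex v with ecc^M(v) > rad_G(M) + α has a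
vertex of strictly smaller M-eccentricity within distance 2α + 1. -/
theorem exists_smaller_ecc_nearby [Fintype V] (G : SimpleGraph V) (hc : G.Connected)
    (α : ℕ) (h : WeaklyHelly G α) (M : Set V) (v : V)
    (hv : radM G M + α < eccM G M v) :
    ∃ u : V, G.dist v u ≤ 2 * α + 1 ∧ eccM G M u < eccM G M v := by
  classical
  rcases M.eq_empty_or_nonempty with hM | hM
  · subst hM; simp [eccM] at hv
  have hbdd : ∀ w : V, BddAbove ((G.dist w) '' M) := fun w => (Set.toFinite _).bddAbove
  have hle : ∀ w : V, ∀ m ∈ M, G.dist w m ≤ eccM G M w := fun w m hm =>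
    le_csSup (hbdd w) ⟨m, hm, rfl⟩
  have : Nonempty V := ⟨v⟩
  obtain ⟨cs, hcs⟩ : radM G M ∈ Set.range (eccM G M) := Nat.sInf_mem (Set.range_nonempty _)
  have hradle : radM G M ≤ eccM G M v := Nat.sInf_le ⟨v, rfl⟩
  have hev : α + 1 ≤ eccM G M v := by omega
  by_cases hcase : v ∈ M ∧ eccM G M v ≤ 2 * α + 1
  · refine ⟨cs, ?_, ?_⟩
    · have h1 := hle cs v hcase.1
      rw [G.dist_comm]
      omega
    · omega
  · set e := eccM G M v with he
    set r : V → ℕ := fun x => if x = v then α + 1 else e - α - 1 with hr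
    have hpair : ∀ x ∈ M ∪ {v}, ∀ y ∈ M ∪ {v}, G.dist x y ≤ r x + r y := by
      intro x hx y hy
      by_cases hxv : x = v <;> by_cases hyv : y = v
      · rw [hxv, hyv]; simp [hr, SimpleGraph.dist_self]
      · have hyM : y ∈ M := hy.resolve_right hyv
        have h1 := hle v y hyM
        simp only [hr]
        rw [hxv, if_pos rfl, if_neg hyv]
        omega
      · have hxM : x ∈ M := hx.resolve_right hxv
        have h1 := hle v x hxM
        simp only [hr]
        rw [hyv, if_pos rfl, if_neg hxv, G.dist_comm]
        omega
      · have hxM : x ∈ M := hx.resolve_right hxv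
        have hyM : y ∈ M := hy.resolve_right hyv
        have h1 := hle cs x hxM
        have h2 := hle cs y hyM
        have h3 : G.dist x y ≤ G.dist x cs + G.dist cs y := hc.dist_triangle
        rw [G.dist_comm] at h1
        simp only [hr, if_neg hxv, if_neg hyv]
        omega
    obtain ⟨c, hcc⟩ := h (M ∪ {v}) r hpair
    have hvc : G.dist v c ≤ 2 * α + 1 := by
      have := hcc v (Set.mem_union_right _ rfl)
      simp only [hr, if_pos rfl] at this
      omega
    refine ⟨c, hvc, ?_⟩
    obtain ⟨m0, hm0, hm0e⟩ : eccM G M c ∈ (G.dist c) '' M :=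
      Nat.sSup_mem (hM.image _) (hbdd c)
    rw [← hm0e]
    by_cases hm0v : m0 = v
    · subst hm0v
      have h2α : 2 * α + 1 < e := by
        by_contra hcon
        exact hcase ⟨hm0, by omega⟩
      rw [G.dist_comm]
      omega
    · have := hcc m0 (Set.mem_union_left _ hm0)
      simp only [hr, if_neg hm0v] at this
      rw [G.dist_comm]
      omega
end

section
/- Let G be an α-weakly-Helly graph and M ⊆ V(G). Then every vertex x satisfies e_G^M(x) ≥ d_G(x, C_G^α(M)) + rad_G(M) − α, where C_G^α(M) = {v : e_G^M(v) ≤ rad_G(M) + α}. -/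
open SimpleGraph

variable {V : Type*}

/-- In an α-weakly-Helly graph, ecc^M(x) ≥ d(x, C_G^α(M)) + rad_G(M) - α. -/
theorem ecc_lower_bound [Fintype V] (G : SimpleGraph V) (hc : G.Connected)
    (α : ℕ) (h : WeaklyHelly G α) (M : Set V) (x : V) :
    distToSet G x (Ck G M α) + radM G M ≤ eccM G M x + α := by
  rcases M.eq_empty_or_nonempty with hM | hM
  · subst hM
    have he : ∀ v : V, eccM G (∅ : Set V) v = 0 := by
      intro v; simp [eccM]
    have hr : radM G (∅ : Set V) = 0 := by
      apply Nat.le_antisymm _ (Nat.zero_le _)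
      exact Nat.sInf_le ⟨x, he x⟩
    have hx : x ∈ Ck G (∅ : Set V) α := by
      simp [Ck, he, hr]
    have hd : distToSet G x (Ck G (∅ : Set V) α) = 0 := by
      apply Nat.le_antisymm _ (Nat.zero_le _)
      exact Nat.sInf_le ⟨x, hx, by simp⟩
    simp [hd, hr]
  · have hbdd : ∀ v : V, ∀ u ∈ M, G.dist v u ≤ eccM G M v := by
      intro v u hu
      exact le_csSup ((M.toFinite.image _).bddAbove) ⟨u, hu, rfl⟩
    have hrx : radM G M ≤ eccM G M x := Nat.sInf_le ⟨x, rfl⟩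
    obtain ⟨c0, hc0⟩ : ∃ c0 : V, eccM G M c0 = radM G M := by
      have hne : Nonempty V := ⟨x⟩
      have : radM G M ∈ Set.range (eccM G M) :=
        Nat.sInf_mem (Set.range_nonempty _)
      exact this.imp fun _ h => h
    set e := eccM G M x with he
    set r := radM G M with hr
    -- pairwise distances within M are ≤ 2r
    have h2r : ∀ u ∈ M, ∀ v ∈ M, G.dist u v ≤ r + r := by
      intro u hu v hv
      calc G.dist u v ≤ G.dist u c0 + G.dist c0 v := hc.dist_triangle
        _ ≤ r + r := by
          have h1 : G.dist c0 u ≤ r := hc0 ▸ hbdd c0 u hu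
          have h2 : G.dist c0 v ≤ r := hc0 ▸ hbdd c0 v hv
          rw [G.dist_comm]
          omega
    -- if x ∈ M then e ≤ 2r
    have hxM : x ∈ M → e ≤ r + r := by
      intro hx
      apply csSup_le (hM.image _)
      rintro d ⟨u, hu, rfl⟩
      calc G.dist x u ≤ G.dist x c0 + G.dist c0 u := hc.dist_triangle
        _ ≤ r + r := by
          have h1 : G.dist c0 x ≤ r := hc0 ▸ hbdd c0 x hx
          have h2 : G.dist c0 u ≤ r := hc0 ▸ hbdd c0 u hu
          rw [G.dist_comm]; omega
    classical
    set rf : V → ℕ := fun v => if v = x then e - r else r with hrf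
    have hpair : ∀ a ∈ M ∪ {x}, ∀ b ∈ M ∪ {x}, G.dist a b ≤ rf a + rf b := by
      intro a ha b hb
      by_cases hax : a = x
      · by_cases hbx : b = x
        · rw [hax, hbx]; simp [hrf, SimpleGraph.dist_self]
        · have hbM : b ∈ M := hb.resolve_right hbx
          have hd : G.dist x b ≤ e := hbdd x b hbM
          rw [hax]
          simp only [hrf, if_pos rfl, if_neg hbx]
          omega
      · by_cases hbx : b = x
        · have haM : a ∈ M := ha.resolve_right hax
          have hd : G.dist x a ≤ e := hbdd x a haM
          rw [hbx, G.dist_comm]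
          simp only [hrf, if_neg hax, if_pos rfl]
          omega
        · have haM : a ∈ M := ha.resolve_right hax
          have hbM : b ∈ M := hb.resolve_right hbx
          have := h2r a haM b hbM
          simp only [hrf, if_neg hax, if_neg hbx]
          omega
    obtain ⟨c, hcc⟩ := h (M ∪ {x}) rf hpair
    have hcCk : c ∈ Ck G M α := by
      show eccM G M c ≤ r + α
      apply csSup_le (hM.image _)
      rintro d ⟨u, hu, rfl⟩
      rw [G.dist_comm]
      have := hcc u (Or.inl hu)
      by_cases hux : u = x
      · subst hux
        have h2 := hxM hu
        simp only [hrf, if_pos rfl] at this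
        omega
      · simpa [hrf, hux] using this
    have hxc : G.dist x c ≤ (e - r) + α := by
      have := hcc x (Or.inr rfl)
      simpa [hrf] using this
    have hdist : distToSet G x (Ck G M α) ≤ (e - r) + α :=
      le_trans (Nat.sInf_le ⟨c, hcCk, rfl⟩) hxc
    omega
end

section
/- In a Helly graph G, for every M ⊆ V(G) and every vertex v, e_G^M(v) = d_G(v, C_G(M)) + rad_G(M), and for any integers ℓ,k ≥ 0, C_G^{ℓ+k}(M) equals the set of vertices at distance at most ℓ from C_G^k(M); consequently diam_G(C_G^{ℓ+k}(M)) ≤ diam_G(C_G^k(M)) + 2ℓ. -/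
open SimpleGraph

variable {V : Type*}

section Aux
variable [Fintype V] (G : SimpleGraph V)

lemma eccM_le {M : Set V} {v : V} {a : ℕ} (h : ∀ u ∈ M, G.dist v u ≤ a) :
    eccM G M v ≤ a := by
  rcases M.eq_empty_or_nonempty with rfl | hM
  · simp [eccM]
  · exact csSup_le (hM.image _) (by rintro d ⟨u, hu, rfl⟩; exact h u hu)

lemma dist_le_eccM {M : Set V} {v u : V} (hu : u ∈ M) :
    G.dist v u ≤ eccM G M v :=
  le_csSup (Set.Finite.bddAbove (M.toFinite.image _)) ⟨u, hu, rfl⟩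

lemma radM_le_eccM (M : Set V) (v : V) : radM G M ≤ eccM G M v :=
  Nat.sInf_le ⟨v, rfl⟩

lemma exists_center [Nonempty V] (M : Set V) :
    ∃ c : V, eccM G M c = radM G M := by
  have : radM G M ∈ Set.range (eccM G M) :=
    Nat.sInf_mem (Set.range_nonempty _)
  exact this

lemma eccM_le_dist_add (hc : G.Connected) {M : Set V} (v c : V) :
    eccM G M v ≤ G.dist v c + eccM G M c := by
  refine eccM_le G fun u hu => ?_
  exact (hc.dist_triangle (v := c)).trans
    (by gcongr; exact dist_le_eccM G hu)

/-- Key Helly argument: a vertex of `C^{l+k}` is within distance `l` of `C^k`. -/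
lemma key [Nonempty V] (hc : G.Connected) (hH : WeaklyHelly G 0) (M : Set V)
    {l k : ℕ} {v : V} (hv : v ∈ Ck G M (l + k)) :
    ∃ c ∈ Ck G M k, G.dist v c ≤ l := by
  classical
  obtain ⟨c0, hc0⟩ := exists_center G M
  set R := radM G M with hR
  -- radius assignment
  set rv : ℕ := if v ∈ M then (if l ≤ R + k then l else R + k) else l with hrv
  set r : V → ℕ := fun x => if x = v then rv else R + k with hr
  have hdiam : ∀ u ∈ M, ∀ w ∈ M, G.dist u w ≤ 2 * R := by
    intro u hu w hw
    calc G.dist u w ≤ G.dist u c0 + G.dist c0 w := hc.dist_triangle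
      _ ≤ R + R := by
          have h1 : G.dist u c0 ≤ R := by
            rw [G.dist_comm]; exact hc0 ▸ dist_le_eccM G hu
          have h2 : G.dist c0 w ≤ R := hc0 ▸ dist_le_eccM G hw
          omega
      _ = 2 * R := by ring
  have hev : eccM G M v ≤ R + (l + k) := hv
  have hpair : ∀ x ∈ M ∪ {v}, ∀ y ∈ M ∪ {v}, G.dist x y ≤ r x + r y := by
    intro x hx y hy
    by_cases hxv : x = v <;> by_cases hyv : y = v
    · simp [hxv, hyv, SimpleGraph.dist_self]
    · have hyM : y ∈ M := by simpa [hyv] using hy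
      have hdvy : G.dist v y ≤ eccM G M v := dist_le_eccM G hyM
      simp only [hr, hxv, if_pos rfl, if_neg hyv]
      by_cases hvM : v ∈ M
      · have := hdiam v hvM y hyM
        simp only [hrv, if_pos hvM]
        split <;> omega
      · simp only [hrv, if_neg hvM]; omega
    · have hxM : x ∈ M := by simpa [hxv] using hx
      have hdvx : G.dist v x ≤ eccM G M v := dist_le_eccM G hxM
      rw [G.dist_comm] at hdvx
      simp only [hr, hyv, if_pos rfl, if_neg hxv, hxv]
      by_cases hvM : v ∈ M
      · have := hdiam x hxM v hvM
        simp only [hrv, if_pos hvM]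
        split <;> omega
      · simp only [hrv, if_neg hvM]; omega
    · have hxM : x ∈ M := by simpa [hxv] using hx
      have hyM : y ∈ M := by simpa [hyv] using hy
      have := hdiam x hxM y hyM
      simp only [hr, if_neg hxv, if_neg hyv]
      omega
  obtain ⟨c, hcc⟩ := hH (M ∪ {v}) r hpair
  have hvc : G.dist v c ≤ rv := by
    have := hcc v (Or.inr rfl)
    simpa [hr] using this
  refine ⟨c, ?_, hvc.trans (by by_cases hvM : v ∈ M <;> simp only [hrv, if_pos, if_neg, hvM] <;> first | rfl | split <;> omega)⟩
  refine eccM_le G fun u hu => ?_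
  rw [G.dist_comm]
  rcases eq_or_ne u v with rfl | huv
  · refine hvc.trans ?_
    simp only [hrv, if_pos hu]
    split <;> omega
  · have := hcc u (Or.inl hu)
    simpa [hr, huv] using this

end Aux

/-- In a Helly graph: the eccentricity formula ecc^M(v) = d(v, C_G(M)) + rad_G(M);
C_G^{l+k}(M) is the disk of radius l around C_G^k(M); and
diam(C_G^{l+k}(M)) ≤ diam(C_G^k(M)) + 2l. -/
theorem helly_center_disk [Fintype V] (G : SimpleGraph V) (hc : G.Connected)
    (hH : WeaklyHelly G 0) (M : Set V) :
    (∀ v : V, eccM G M v = distToSet G v (Ck G M 0) + radM G M) ∧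
    (∀ l k : ℕ, Ck G M (l + k) = {v : V | distToSet G v (Ck G M k) ≤ l}) ∧
    (∀ l k : ℕ, diamS G (Ck G M (l + k)) ≤ diamS G (Ck G M k) + 2 * l) := by

  have : Nonempty V := hc.nonempty
  obtain ⟨c0, hc0⟩ := exists_center G M
  have hc0k : ∀ k, c0 ∈ Ck G M k := fun k => by
    simp only [Ck, Set.mem_setOf_eq, hc0]; omega
  -- Part 2 first
  have part2 : ∀ l k : ℕ, Ck G M (l + k) = {v : V | distToSet G v (Ck G M k) ≤ l} := by
    intro l k
    ext v
    simp only [Set.mem_setOf_eq]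
    constructor
    · intro hv
      obtain ⟨c, hcC, hvc⟩ := key G hc hH M hv
      exact le_trans (Nat.sInf_le ⟨c, hcC, rfl⟩) hvc
    · intro hd
      have hne : ((G.dist v) '' (Ck G M k)).Nonempty := ⟨_, c0, hc0k k, rfl⟩
      obtain ⟨c, hcC, hdc⟩ := Nat.sInf_mem hne
      have h1 : eccM G M v ≤ G.dist v c + eccM G M c := eccM_le_dist_add G hc v c
      have h2 : eccM G M c ≤ radM G M + k := hcC
      have h3 : G.dist v c ≤ l := by rw [hdc]; exact hd
      show eccM G M v ≤ radM G M + (l + k)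
      omega
  refine ⟨?_, part2, ?_⟩
  · intro v
    have hrv : radM G M ≤ eccM G M v := radM_le_eccM G M v
    have hv : v ∈ Ck G M ((eccM G M v - radM G M) + 0) := by
      simp only [Ck, Set.mem_setOf_eq]; omega
    rw [part2 _ 0] at hv
    have hle : distToSet G v (Ck G M 0) ≤ eccM G M v - radM G M := hv
    have hne : ((G.dist v) '' (Ck G M 0)).Nonempty := ⟨_, c0, hc0k 0, rfl⟩
    obtain ⟨c, hcC, hdc⟩ := Nat.sInf_mem hne
    have h1 : eccM G M v ≤ G.dist v c + eccM G M c := eccM_le_dist_add G hc v c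
    have h2 : eccM G M c ≤ radM G M + 0 := hcC
    have h3 : distToSet G v (Ck G M 0) = G.dist v c := hdc.symm
    unfold distToSet at hle h3 ⊢
    omega
  · intro l k
    have hbdd : BddAbove {d | ∃ u ∈ Ck G M k, ∃ v ∈ Ck G M k, d = G.dist u v} := by
      apply Set.Finite.bddAbove
      apply Set.Finite.subset (Set.finite_range (fun p : V × V => G.dist p.1 p.2))
      rintro d ⟨u, _, v, _, rfl⟩
      exact ⟨(u, v), rfl⟩
    have hne : {d | ∃ u ∈ Ck G M (l + k), ∃ v ∈ Ck G M (l + k), d = G.dist u v}.Nonempty :=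
      ⟨_, c0, hc0k _, c0, hc0k _, rfl⟩
    refine csSup_le hne ?_
    rintro d ⟨u, hu, v, hv, rfl⟩
    obtain ⟨cu, hcu, hdu⟩ := key G hc hH M hu
    obtain ⟨cv, hcv, hdv⟩ := key G hc hH M hv
    have hmid : G.dist cu cv ≤ diamS G (Ck G M k) :=
      le_csSup hbdd ⟨cu, hcu, cv, hcv, rfl⟩
    have t1 : G.dist u v ≤ G.dist u cu + G.dist cu v := hc.dist_triangle
    have t2 : G.dist cu v ≤ G.dist cu cv + G.dist cv v := hc.dist_triangle
    have hdv' : G.dist cv v ≤ l := by rw [G.dist_comm]; exact hdv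
    omega
end

section
/- Every cycle C_n (n ≥ 3) has Helly-gap exactly ⌊n/4⌋: C_n is ⌊n/4⌋-weakly-Helly but not (⌊n/4⌋−1)-weakly-Helly (when ⌊n/4⌋ ≥ 1). -/
open SimpleGraph

variable {V : Type*}

/-- The cycle graph on ZMod n: u ~ v iff they differ by ±1. -/
def cycleG (n : ℕ) : SimpleGraph (ZMod n) where
  Adj u v := u ≠ v ∧ (u - v = 1 ∨ v - u = 1)
  symm := by
    constructor
    intro u v h
    exact ⟨h.1.symm, h.2.symm⟩
  loopless := by
    constructor
    intro v h
    exact h.1 rfl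

section CycleLemmas

variable {n : ℕ}

lemma cycle_adj_succ (hn : 3 ≤ n) (x : ZMod n) : (cycleG n).Adj x (x + 1) := by
  haveI : Fact (1 < n) := ⟨by omega⟩
  refine ⟨fun h => ?_, Or.inr (by ring)⟩
  have : (1 : ZMod n) = 0 := by
    have := congrArg (· - x) h
    simpa using this.symm
  exact one_ne_zero this

lemma cycle_exists_walk_le (hn : 3 ≤ n) (k : ℕ) (x : ZMod n) :
    ∃ w : (cycleG n).Walk x (x + (k : ZMod n)), w.length ≤ k := by
  induction k with
  | zero => exact ⟨(SimpleGraph.Walk.nil).copy rfl (by simp), by simp⟩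
  | succ k ih =>
    obtain ⟨w, hw⟩ := ih
    refine ⟨(w.concat (cycle_adj_succ hn _)).copy rfl (by push_cast; ring), ?_⟩
    rw [SimpleGraph.Walk.length_copy, SimpleGraph.Walk.length_concat]
    omega

lemma cycle_dist_le_val (hn : 3 ≤ n) (x y : ZMod n) :
    (cycleG n).dist x y ≤ (y - x).val := by
  haveI : NeZero n := ⟨by omega⟩
  obtain ⟨w, hw⟩ := cycle_exists_walk_le hn ((y - x).val) x
  have hx : x + (((y - x).val : ℕ) : ZMod n) = y := by
    rw [ZMod.natCast_rightInverse (y - x)]; ring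
  refine le_trans (SimpleGraph.dist_le (w.copy rfl hx)) ?_
  rwa [SimpleGraph.Walk.length_copy]

lemma cycle_dist_le_half (hn : 3 ≤ n) (x y : ZMod n) :
    (cycleG n).dist x y ≤ n / 2 := by
  haveI : NeZero n := ⟨by omega⟩
  by_cases hxy : x = y
  · subst hxy; rw [SimpleGraph.dist_self]; exact Nat.zero_le _
  · have h1 := cycle_dist_le_val hn x y
    have h2 := cycle_dist_le_val hn y x
    rw [SimpleGraph.dist_comm] at h2
    have hne : y - x ≠ 0 := sub_ne_zero.mpr (Ne.symm hxy)
    have hxm : x - y = -(y - x) := by ring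
    rw [hxm, ZMod.neg_val, if_neg hne] at h2
    have h3 := ZMod.val_lt (y - x)
    have h4 : (y - x).val ≠ 0 := fun h => hne ((ZMod.val_eq_zero _).mp h)
    omega

lemma cycle_length_ge (hn : 3 ≤ n) {x c : ZMod n} (w : (cycleG n).Walk x c) :
    min (x - c).val (n - (x - c).val) ≤ w.length := by
  haveI : NeZero n := ⟨by omega⟩
  haveI : Fact (1 < n) := ⟨by omega⟩
  induction w with
  | nil => simp
  | @cons a b c' hadj w ih =>
    rw [SimpleGraph.Walk.length_cons]
    have htlt : (b - c').val < n := ZMod.val_lt _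
    rcases hadj.2 with h1 | h1
    · have hac : a - c' = (b - c') + 1 := by rw [← h1]; ring
      rw [hac, ZMod.val_add, ZMod.val_one]
      generalize ht : (b - c').val = t at ih htlt ⊢
      rcases Nat.lt_or_ge (t + 1) n with h | h
      · rw [Nat.mod_eq_of_lt h]; omega
      · have he : t + 1 = n := by omega
        rw [he, Nat.mod_self]; omega
    · have hac : a - c' = (b - c') + (-1) := by rw [← h1]; ring
      have hneg : (-1 : ZMod n).val = n - 1 := by
        rw [ZMod.neg_val, if_neg one_ne_zero, ZMod.val_one]
      rw [hac, ZMod.val_add, hneg]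
      generalize ht : (b - c').val = t at ih htlt ⊢
      rcases Nat.eq_zero_or_pos t with h | h
      · rw [h, Nat.zero_add, Nat.mod_eq_of_lt (by omega)]; omega
      · have he : t + (n - 1) = (t - 1) + 1 * n := by omega
        rw [he, Nat.add_mul_mod_self_right, Nat.mod_eq_of_lt (by omega)]
        omega

lemma cycle_dist_ge (hn : 3 ≤ n) (x c : ZMod n) :
    min (x - c).val (n - (x - c).val) ≤ (cycleG n).dist x c := by
  haveI : NeZero n := ⟨by omega⟩
  obtain ⟨w, hw⟩ := cycle_exists_walk_le hn ((c - x).val) x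
  have hx : x + (((c - x).val : ℕ) : ZMod n) = c := by
    rw [ZMod.natCast_rightInverse (c - x)]; ring
  have hreach : (cycleG n).Reachable x c := ⟨w.copy rfl hx⟩
  obtain ⟨w', hw'⟩ := hreach.exists_walk_length_eq_dist
  rw [← hw']
  exact cycle_length_ge hn w'

end CycleLemmas

/-- The cycle C_n (n ≥ 3) has Helly-gap exactly ⌊n/4⌋: it is ⌊n/4⌋-weakly-Helly,
and (when ⌊n/4⌋ ≥ 1) it is not (⌊n/4⌋ - 1)-weakly-Helly. -/
theorem hellyGap_cycle (n : ℕ) (hn : 3 ≤ n) :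
    WeaklyHelly (cycleG n) (n / 4) ∧
      (1 ≤ n / 4 → ¬ WeaklyHelly (cycleG n) (n / 4 - 1)) := by
  haveI : NeZero n := ⟨by omega⟩
  constructor
  · intro S r hr
    by_cases h : ∃ u ∈ S, r u ≤ n / 4
    · obtain ⟨u, hu, hru⟩ := h
      exact ⟨u, fun v hv => le_trans (hr v hv u hu) (by omega)⟩
    · push_neg at h
      refine ⟨0, fun v hv => ?_⟩
      have h1 := cycle_dist_le_half hn v 0
      have h2 := h v hv
      omega
  · intro h4 hWH
    obtain ⟨c, hc⟩ := hWH Set.univ (fun _ => (n + 2) / 4)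
      (fun x _ y _ => by
        show (cycleG n).dist x y ≤ (n + 2) / 4 + (n + 2) / 4
        have := cycle_dist_le_half hn x y; omega)
    have hv : (cycleG n).dist (c + ((n / 2 : ℕ) : ZMod n)) c ≤ (n + 2) / 4 + (n / 4 - 1) :=
      hc (c + ((n / 2 : ℕ) : ZMod n)) (Set.mem_univ _)
    have hge := cycle_dist_ge hn (c + ((n / 2 : ℕ) : ZMod n)) c
    have heq : c + ((n / 2 : ℕ) : ZMod n) - c = ((n / 2 : ℕ) : ZMod n) := by ring
    rw [heq, ZMod.val_cast_of_lt (by omega : n / 2 < n)] at hge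
    omega
end

section
/- If a graph G satisfies the α_i-metric property, then G is ⌈i/2⌉-weakly-Helly: any family of pairwise intersecting disks in G has a nonempty common intersection when each radius is increased by ⌈i/2⌉. -/
open SimpleGraph

variable {V : Type*}

/-- A graph with an α_i-metric is ⌈i/2⌉-weakly-Helly, where ⌈i/2⌉ = (i+1)/2.
The α_i-metric condition: for all x,y,z,v with z ∈ I(x,y) and y ∈ I(z,v),
d(x,v) ≥ d(x,y) + d(y,v) - i. -/
theorem weaklyHelly_of_alpha_i [Fintype V] (G : SimpleGraph V) (hc : G.Connected)
    (i : ℕ)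
    (hai : ∀ x y z v : V, G.dist x z + G.dist z y = G.dist x y →
      G.dist z y + G.dist y v = G.dist z v →
      G.dist x y + G.dist y v ≤ G.dist x v + i) :
    WeaklyHelly G ((i + 1) / 2) := by
  classical
  intro S r hpair
  obtain ⟨c₀⟩ := hc.nonempty
  have hex : ∃ k : ℕ, ∃ c : V, ∀ v ∈ S, G.dist v c ≤ r v + k := by
    refine ⟨Finset.univ.sup (fun v => G.dist v c₀), c₀, fun v _ => ?_⟩
    exact le_trans (Finset.le_sup (f := fun u => G.dist u c₀) (Finset.mem_univ v)) (Nat.le_add_left _ _)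
  set k := Nat.find hex with hkdef
  by_cases hk : k ≤ (i + 1) / 2
  · obtain ⟨c, hcp⟩ := Nat.find_spec hex
    exact ⟨c, fun v hv => le_trans (hcp v hv) (by omega)⟩
  push_neg at hk
  exfalso
  have hk1 : 1 ≤ k := by omega
  -- choose c among centers minimizing the number of far vertices
  have hCne : (Finset.univ.filter
      (fun c => ∀ v ∈ S, G.dist v c ≤ r v + k)).Nonempty := by
    obtain ⟨c, hcp⟩ := Nat.find_spec hex
    exact ⟨c, by simpa using hcp⟩
  obtain ⟨c, hcC, hcmin⟩ := Finset.exists_min_image _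
    (fun c => (Finset.univ.filter (fun v => v ∈ S ∧ G.dist v c = r v + k)).card) hCne
  have hC : ∀ v ∈ S, G.dist v c ≤ r v + k := by
    simpa using hcC
  -- a far vertex x
  have hmin : ¬ ∃ c : V, ∀ v ∈ S, G.dist v c ≤ r v + (k - 1) :=
    Nat.find_min hex (by omega)
  push_neg at hmin
  obtain ⟨x, hxS, hxfar⟩ := hmin c
  have hx : G.dist x c = r x + k := by
    have := hC x hxS; omega
  -- a neighbor c₁ of c on a shortest path to x
  have hdcx : G.dist c x ≠ 0 := by
    rw [SimpleGraph.dist_comm]; omega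
  obtain ⟨p, hp⟩ := SimpleGraph.exists_walk_of_dist_ne_zero hdcx
  obtain ⟨c₁, hadj, q, rfl, hq⟩ :
      ∃ (c₁ : V) (_ : G.Adj c c₁) (q : G.Walk c₁ x), p = SimpleGraph.Walk.cons ‹_› q ∧
        q.length + 1 = G.dist c x := by
    cases p with
    | nil => simp at hp hdcx
    | cons hadj q => exact ⟨_, hadj, q, rfl, by simpa using hp⟩
  have hcc₁ : G.dist c c₁ = 1 := SimpleGraph.dist_eq_one_iff_adj.mpr hadj
  have hxc₁ : G.dist x c₁ = r x + (k - 1) := by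
    have h1 : G.dist c₁ x ≤ q.length := SimpleGraph.dist_le q
    have h2 : G.dist c x ≤ G.dist c c₁ + G.dist c₁ x := hc.dist_triangle
    have h3 : G.dist c x = G.dist x c := SimpleGraph.dist_comm
    have h4 : G.dist c₁ x = G.dist x c₁ := SimpleGraph.dist_comm
    omega
  -- the good configuration leads to a contradiction via the α_i property
  have hgood : ¬ ∃ y, y ∈ S ∧ G.dist y c₁ = G.dist y c + 1 ∧ r y + k ≤ G.dist y c₁ := by
    rintro ⟨y, hyS, hyeq, hyge⟩
    have h1 : G.dist x c₁ + G.dist c₁ c = G.dist x c := by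
      have : G.dist c₁ c = G.dist c c₁ := SimpleGraph.dist_comm
      omega
    have h2 : G.dist c₁ c + G.dist c y = G.dist c₁ y := by
      have e1 : G.dist c₁ c = G.dist c c₁ := SimpleGraph.dist_comm
      have e2 : G.dist c y = G.dist y c := SimpleGraph.dist_comm
      have e3 : G.dist c₁ y = G.dist y c₁ := SimpleGraph.dist_comm
      omega
    have hmain := hai x c c₁ y h1 h2
    have hxy : G.dist x y ≤ r x + r y := hpair x hxS y hyS
    have e2 : G.dist c y = G.dist y c := SimpleGraph.dist_comm
    have hyc : G.dist y c ≤ r y + k := hC y hyS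
    omega
  -- otherwise c₁ is also a center with strictly fewer far vertices
  have hc₁C : ∀ v ∈ S, G.dist v c₁ ≤ r v + k := by
    intro v hv
    by_contra hbig
    push_neg at hbig
    have htri : G.dist v c₁ ≤ G.dist v c + G.dist c c₁ := hc.dist_triangle
    have hvc : G.dist v c ≤ r v + k := hC v hv
    exact hgood ⟨v, hv, by omega, by omega⟩
  have hsub : (Finset.univ.filter (fun v => v ∈ S ∧ G.dist v c₁ = r v + k)) ⊂
      (Finset.univ.filter (fun v => v ∈ S ∧ G.dist v c = r v + k)) := by
    constructor
    · intro y hy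
      simp only [Finset.mem_filter, Finset.mem_univ, true_and] at hy ⊢
      obtain ⟨hyS, hyd⟩ := hy
      refine ⟨hyS, ?_⟩
      have htri : G.dist y c₁ ≤ G.dist y c + G.dist c c₁ := hc.dist_triangle
      have hyc : G.dist y c ≤ r y + k := hC y hyS
      by_contra hne
      exact hgood ⟨y, hyS, by omega, by omega⟩
    · intro hback
      have hxmem : x ∈ (Finset.univ.filter
          (fun v => v ∈ S ∧ G.dist v c = r v + k)) := by
        simp only [Finset.mem_filter, Finset.mem_univ, true_and]
        exact ⟨hxS, hx⟩
      have := hback hxmem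
      simp only [Finset.mem_filter, Finset.mem_univ, true_and] at this
      have hx1 : G.dist x c₁ = r x + k := this.2
      omega
  have hlt := Finset.card_lt_card hsub
  have hle := hcmin c₁ (by simpa using hc₁C)
  omega
end

section
/- If a graph G admits a tree-decomposition of breadth ρ, then G is ρ-weakly-Helly: any family of pairwise intersecting disks of G has a common intersection when each radius is increased by ρ. -/
open SimpleGraph

variable {V : Type*}

namespace TreeHellyAux

open SimpleGraph Walk

variable {ι : Type*} {T : SimpleGraph ι}

/-- A set of vertices is path-closed if it contains every path between two of its members. -/
def PC (T : SimpleGraph ι) (A : Set ι) : Prop :=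
  ∀ a ∈ A, ∀ b ∈ A, ∀ p : T.Walk a b, p.IsPath → ∀ x ∈ p.support, x ∈ A

lemma PC.inter {A B : Set ι} (hA : PC T A) (hB : PC T B) : PC T (A ∩ B) :=
  fun a ha b hb p hp x hx =>
    ⟨hA a ha.1 b hb.1 p hp x hx, hB a ha.2 b hb.2 p hp x hx⟩

/-- Split a walk at the first vertex belonging to a set containing the endpoint. -/
lemma split_lemma {a b : ι} (p : T.Walk a b) (Sset : Set ι) :
    b ∈ Sset →
    ∃ (m : ι) (q : T.Walk a m) (rw : T.Walk m b),
      m ∈ Sset ∧ (∀ x ∈ q.support, x ∈ Sset → x = m) ∧ q.append rw = p := by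
  classical
  induction p with
  | nil =>
    intro hb
    exact ⟨_, Walk.nil, Walk.nil, hb, by simp, rfl⟩
  | @cons u x w h p' ih =>
    intro hb
    by_cases hu : u ∈ Sset
    · exact ⟨u, Walk.nil, Walk.cons h p', hu, by simp, rfl⟩
    · obtain ⟨m, q, rw, hm, hq, happ⟩ := ih hb
      refine ⟨m, Walk.cons h q, rw, hm, ?_, by rw [Walk.cons_append, happ]⟩
      intro y hy hyS
      rw [Walk.support_cons, List.mem_cons] at hy
      rcases hy with rfl | hy
      · exact absurd hyS hu
      · exact hq y hy hyS

lemma walk_in_set {s : Set ι} (h : (SimpleGraph.induce s T).Connected) {i j : ι}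
    (hi : i ∈ s) (hj : j ∈ s) :
    ∃ p : T.Walk i j, ∀ x ∈ p.support, x ∈ s := by
  obtain ⟨q⟩ := h ⟨i, hi⟩ ⟨j, hj⟩
  let f : (SimpleGraph.induce s T) →g T := ⟨Subtype.val, fun hadj => hadj⟩
  refine ⟨q.map f, ?_⟩
  intro x hx
  rw [Walk.support_map] at hx
  obtain ⟨y, _, rfl⟩ := List.mem_map.mp hx
  exact y.2

/-- Any two vertices of a path-closed set built from a connected family have the unique
tree path inside; here: the median of three vertices of a tree. -/
lemma median (hT : T.IsTree) (a b c : ι) :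
    ∃ m : ι, (∀ p : T.Walk a b, p.IsPath → m ∈ p.support) ∧
             (∀ p : T.Walk a c, p.IsPath → m ∈ p.support) ∧
             (∀ p : T.Walk b c, p.IsPath → m ∈ p.support) := by
  classical
  obtain ⟨pab, hpab, hpab_uniq⟩ := hT.existsUnique_path a b
  obtain ⟨pbc, hpbc, hpbc_uniq⟩ := hT.existsUnique_path b c
  obtain ⟨pac, hpac, hpac_uniq⟩ := hT.existsUnique_path a c
  obtain ⟨m, q, rw, hm, hq, happ⟩ :=
    split_lemma pab {x | x ∈ pbc.support} (Walk.start_mem_support pbc)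
  -- q : a → m, with only m of its support on pbc
  have hqpath : q.IsPath := by
    have := hpab; rw [← happ] at this; exact this.of_append_left
  have hmab : m ∈ pab.support := by
    rw [← happ, Walk.mem_support_append_iff]; exact Or.inl q.end_mem_support
  -- the second half : from m to c along pbc
  set q2 := pbc.dropUntil m hm with hq2def
  have hq2path : q2.IsPath := hpbc.dropUntil hm
  have hq2sub : q2.support ⊆ pbc.support := pbc.support_dropUntil_subset hm
  have hkey : (q.append q2).IsPath := by
    rw [Walk.isPath_def, Walk.support_append, List.nodup_append]
    refine ⟨hqpath.support_nodup, ?_, ?_⟩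
    · have hnd := hq2path.support_nodup
      rw [q2.support_eq_cons, List.nodup_cons] at hnd
      rw [q2.support_eq_cons]
      exact List.Nodup.cons (by exact hnd.1) hnd.2 |>.tail
    · intro x hxq y hxq2 hxy; subst hxy
      have hx2 : x ∈ q2.support := by
        rw [q2.support_eq_cons]; exact List.mem_cons_of_mem _ hxq2
      have hxm : x = m := hq x hxq (hq2sub hx2)
      subst hxm
      have : q2.support = x :: q2.support.tail := q2.support_eq_cons
      have hnd := hq2path.support_nodup
      rw [this, List.nodup_cons] at hnd
      exact hnd.1 hxq2
  have hmac : m ∈ pac.support := by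
    rw [← hpac_uniq (q.append q2) hkey, Walk.mem_support_append_iff]
    exact Or.inl q.end_mem_support
  refine ⟨m, ?_, ?_, ?_⟩
  · intro p hp; rw [hpab_uniq p hp]; exact hmab
  · intro p hp; rw [hpac_uniq p hp]; exact hmac
  · intro p hp; rw [hpbc_uniq p hp]; exact hm

lemma helly3 (hT : T.IsTree) {A B C : Set ι} (hA : PC T A) (hB : PC T B) (hC : PC T C)
    (hab : (A ∩ B).Nonempty) (hac : (A ∩ C).Nonempty) (hbc : (B ∩ C).Nonempty) :
    (A ∩ B ∩ C).Nonempty := by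
  obtain ⟨a, haB, haC⟩ := hbc
  obtain ⟨b, hbA, hbC⟩ := hac
  obtain ⟨c, hcA, hcB⟩ := hab
  obtain ⟨m, hmab, hmac, hmbc⟩ := median hT a b c
  obtain ⟨pab, hpab, -⟩ := hT.existsUnique_path a b
  obtain ⟨pac, hpac, -⟩ := hT.existsUnique_path a c
  obtain ⟨pbc, hpbc, -⟩ := hT.existsUnique_path b c
  refine ⟨m, ⟨?_, ?_⟩, ?_⟩
  · exact hA b hbA c hcA pbc hpbc m (hmbc pbc hpbc)
  · exact hB a haB c hcB pac hpac m (hmac pac hpac)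
  · exact hC a haC b hbC pab hpab m (hmab pab hpab)

lemma helly (hT : T.IsTree) {β : Type*} (F : Finset β) (A : β → Set ι)
    (hne : ∀ s ∈ F, (A s).Nonempty) (hpc : ∀ s ∈ F, PC T (A s))
    (hint : ∀ s ∈ F, ∀ t ∈ F, (A s ∩ A t).Nonempty) :
    ∃ m : ι, ∀ s ∈ F, m ∈ A s := by
  classical
  haveI : Nonempty ι := hT.isConnected.nonempty
  induction F using Finset.induction generalizing A with
  | empty => exact ⟨Classical.arbitrary ι, by simp⟩
  | @insert a F ha ih =>
    rcases F.eq_empty_or_nonempty with rfl | hFne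
    · obtain ⟨m, hm⟩ := hne a (Finset.mem_insert_self a _)
      exact ⟨m, by simpa using hm⟩
    · obtain ⟨b, hb⟩ := hFne
      have hmemi : ∀ t ∈ F, t ∈ insert a F := fun t ht => Finset.mem_insert_of_mem ht
      have hai : a ∈ insert a F := Finset.mem_insert_self a _
      obtain ⟨m, hm⟩ := ih (fun t => if t = b then A a ∩ A b else A t)
        (fun t ht => by
          by_cases htb : t = b
          · subst htb
            simpa using hint a hai t (hmemi t ht)
          · simpa [htb] using hne t (hmemi t ht))
        (fun t ht => by
          by_cases htb : t = b
          · subst htb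
            simpa using PC.inter (hpc a hai) (hpc t (hmemi t ht))
          · simpa [htb] using hpc t (hmemi t ht))
        (fun s hs t ht => by
          have hmemEq : ∀ u : β, u = b → ∀ x : ι, x ∈ A a ∩ A b →
              x ∈ (if u = b then A a ∩ A b else A u) := by
            intro u hu x hx; rw [if_pos hu]; exact hx
          have hmemNe : ∀ u : β, u ≠ b → ∀ x : ι, x ∈ A u →
              x ∈ (if u = b then A a ∩ A b else A u) := by
            intro u hu x hx; rw [if_neg hu]; exact hx
          by_cases hsb : s = b <;> by_cases htb : t = b
          · obtain ⟨x, hx1, hx2⟩ := hint a hai b (hmemi b hb)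
            exact ⟨x, hmemEq s hsb x ⟨hx1, hx2⟩, hmemEq t htb x ⟨hx1, hx2⟩⟩
          · have h3 := helly3 hT (hpc a hai) (hpc b (hmemi b hb)) (hpc t (hmemi t ht))
              (hint a hai b (hmemi b hb)) (hint a hai t (hmemi t ht))
              (hint b (hmemi b hb) t (hmemi t ht))
            obtain ⟨x, ⟨hx1, hx2⟩, hx3⟩ := h3
            exact ⟨x, hmemEq s hsb x ⟨hx1, hx2⟩, hmemNe t htb x hx3⟩
          · have h3 := helly3 hT (hpc a hai) (hpc b (hmemi b hb)) (hpc s (hmemi s hs))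
              (hint a hai b (hmemi b hb)) (hint a hai s (hmemi s hs))
              (hint b (hmemi b hb) s (hmemi s hs))
            obtain ⟨x, ⟨hx1, hx2⟩, hx3⟩ := h3
            exact ⟨x, hmemNe s hsb x hx3, hmemEq t htb x ⟨hx1, hx2⟩⟩
          · obtain ⟨x, hx1, hx2⟩ := hint s (hmemi s hs) t (hmemi t ht)
            exact ⟨x, hmemNe s hsb x hx1, hmemNe t htb x hx2⟩)
      have hmb : m ∈ A a ∩ A b := by
        have h := hm b hb
        rwa [if_pos rfl] at h
      refine ⟨m, ?_⟩
      intro t ht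
      rcases Finset.mem_insert.mp ht with rfl | htF
      · exact hmb.1
      · by_cases htb : t = b
        · subst htb; exact hmb.2
        · have h := hm t htF
          rwa [if_neg htb] at h

end TreeHellyAux

section GraphSide

variable [Fintype V] {G : SimpleGraph V}

/-- Along a walk of length at most `a + b` there is a vertex at distance at most `a` from the
start and at most `b` from the end. -/
lemma walk_split_dist (hc : G.Connected) :
    ∀ {u v : V} (p : G.Walk u v) (a b : ℕ), p.length ≤ a + b →
      ∃ w : V, G.dist u w ≤ a ∧ G.dist w v ≤ b := by
  intro u v p
  induction p with
  | @nil w =>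
    intro a b _
    exact ⟨w, by rw [SimpleGraph.dist_self]; omega, by rw [SimpleGraph.dist_self]; omega⟩
  | @cons u x v h q ih =>
    intro a b hlen
    rcases Nat.eq_zero_or_pos a with rfl | hapos
    · refine ⟨u, by rw [SimpleGraph.dist_self], ?_⟩
      calc G.dist u v ≤ (Walk.cons h q).length := SimpleGraph.dist_le _
        _ ≤ b := by simpa using hlen
    · obtain ⟨a', rfl⟩ := Nat.exists_eq_add_of_le hapos
      have hlen' : q.length + 1 ≤ 1 + a' + b := by
        simpa [SimpleGraph.Walk.length_cons] using hlen
      obtain ⟨w, hw1, hw2⟩ := ih a' b (by omega)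
      refine ⟨w, ?_, hw2⟩
      calc G.dist u w ≤ G.dist u x + G.dist x w := hc.dist_triangle
        _ ≤ 1 + a' := by
            have h1 : G.dist u x ≤ 1 := le_of_eq (SimpleGraph.dist_eq_one_iff_adj.mpr h)
            omega

/-- Bags meeting a ball around `v` are connected in the decomposition tree. -/
lemma walk_to_bag {ι : Type*} {G : SimpleGraph V} (hc : G.Connected) {T : SimpleGraph ι}
    (B : ι → Set V)
    (hedge : ∀ u v : V, G.Adj u v → ∃ i, u ∈ B i ∧ v ∈ B i)
    (hsub : ∀ v : V, (SimpleGraph.induce {i | v ∈ B i} T).Connected)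
    (r : ℕ) :
    ∀ {w v : V} (q : G.Walk w v), q.length ≤ r → ∀ i, w ∈ B i → ∀ j, v ∈ B j →
      ∃ p : T.Walk i j, ∀ x ∈ p.support, ∃ z ∈ B x, G.dist v z ≤ r := by
  intro w v q
  induction q with
  | @nil u =>
    intro _ i hi j hj
    obtain ⟨p, hp⟩ := TreeHellyAux.walk_in_set (hsub u) hi hj
    exact ⟨p, fun x hx => ⟨u, hp x hx, by rw [SimpleGraph.dist_self]; omega⟩⟩
  | @cons u x vv h q' ih =>
    intro hlen i hi j hj
    obtain ⟨k, hk1, hk2⟩ := hedge u x h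
    have hlen' : q'.length ≤ r := by
      have : (Walk.cons h q').length = q'.length + 1 := SimpleGraph.Walk.length_cons h q'
      omega
    obtain ⟨p2, hp2⟩ := ih hlen' k hk2 j hj
    obtain ⟨p1, hp1⟩ := TreeHellyAux.walk_in_set (hsub u) hi hk1
    have hdu : G.dist vv u ≤ r := by
      rw [SimpleGraph.dist_comm]
      calc G.dist u vv ≤ (Walk.cons h q').length := SimpleGraph.dist_le _
        _ ≤ r := hlen
    refine ⟨p1.append p2, ?_⟩
    intro y hy
    rw [Walk.mem_support_append_iff] at hy
    rcases hy with hy | hy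
    · exact ⟨u, hp1 y hy, hdu⟩
    · exact hp2 y hy

end GraphSide

/-- If G admits a tree-decomposition of breadth ρ, then G is ρ-weakly-Helly. -/
theorem weaklyHelly_of_treeBreadth [Fintype V] {ι : Type*} (G : SimpleGraph V)
    (hc : G.Connected) (T : SimpleGraph ι) (hT : T.IsTree) (B : ι → Set V)
    (hvert : ∀ v : V, ∃ i, v ∈ B i)
    (hedge : ∀ u v : V, G.Adj u v → ∃ i, u ∈ B i ∧ v ∈ B i)
    (hsub : ∀ v : V, (SimpleGraph.induce {i | v ∈ B i} T).Connected)
    (ρ : ℕ) (hbreadth : ∀ i, ∃ c : V, ∀ u ∈ B i, G.dist c u ≤ ρ) :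
    WeaklyHelly G ρ := by
  classical
  intro S r hS
  haveI : Nonempty V := hc.nonempty
  set A : V → Set ι := fun v => {i | ∃ w ∈ B i, G.dist v w ≤ r v} with hA
  have hAmem : ∀ v i, i ∈ A v ↔ ∃ w ∈ B i, G.dist v w ≤ r v := fun v i => Iff.rfl
  -- each A v is nonempty
  have hAne : ∀ v : V, (A v).Nonempty := by
    intro v
    obtain ⟨i, hi⟩ := hvert v
    exact ⟨i, v, hi, by rw [SimpleGraph.dist_self]; omega⟩
  -- each A v is connected in T, hence path-closed
  have key : ∀ v : V, ∀ i ∈ A v, ∀ j ∈ A v,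
      ∃ p : T.Walk i j, ∀ x ∈ p.support, x ∈ A v := by
    intro v i hi j hj
    obtain ⟨j₀, hj₀⟩ := hvert v
    obtain ⟨wi, hwi, hdi⟩ := hi
    obtain ⟨wj, hwj, hdj⟩ := hj
    obtain ⟨qi, hqi⟩ := hc.exists_walk_length_eq_dist wi v
    obtain ⟨qj, hqj⟩ := hc.exists_walk_length_eq_dist wj v
    obtain ⟨p1, hp1⟩ := walk_to_bag hc B hedge hsub (r v) qi
      (by rw [hqi, SimpleGraph.dist_comm]; exact hdi) i hwi j₀ hj₀
    obtain ⟨p2, hp2⟩ := walk_to_bag hc B hedge hsub (r v) qj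
      (by rw [hqj, SimpleGraph.dist_comm]; exact hdj) j hwj j₀ hj₀
    refine ⟨p1.append p2.reverse, ?_⟩
    intro x hx
    rw [Walk.mem_support_append_iff] at hx
    rcases hx with hx | hx
    · exact hp1 x hx
    · rw [SimpleGraph.Walk.support_reverse, List.mem_reverse] at hx
      exact hp2 x hx
  have hPC : ∀ v : V, TreeHellyAux.PC T (A v) := by
    intro v a ha b hb p hp x hx
    obtain ⟨q, hq⟩ := key v a ha b hb
    have hbp : q.bypass.IsPath := SimpleGraph.Walk.bypass_isPath q
    have hpq : p = q.bypass := (hT.existsUnique_path a b).unique hp hbp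
    rw [hpq] at hx
    exact hq x (SimpleGraph.Walk.support_bypass_subset q hx)
  -- pairwise intersection of the subtrees
  obtain ⟨m, hm⟩ := TreeHellyAux.helly hT (Set.toFinite S).toFinset A
    (fun v _ => hAne v) (fun v _ => hPC v)
    (by
      intro u hu v hv
      rw [Set.Finite.mem_toFinset] at hu hv
      obtain ⟨p, hp⟩ := hc.exists_walk_length_eq_dist u v
      obtain ⟨w, hw1, hw2⟩ := walk_split_dist hc p (r u) (r v)
        (by rw [hp]; exact hS u hu v hv)
      obtain ⟨i, hi⟩ := hvert w
      exact ⟨i, ⟨w, hi, hw1⟩, ⟨w, hi, by rw [SimpleGraph.dist_comm]; exact hw2⟩⟩)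
  obtain ⟨c, hcB⟩ := hbreadth m
  refine ⟨c, ?_⟩
  intro v hv
  obtain ⟨w, hwB, hdw⟩ := hm v ((Set.Finite.mem_toFinset _).mpr hv)
  calc G.dist v c ≤ G.dist v w + G.dist w c := hc.dist_triangle
    _ ≤ r v + ρ := by
        have h1 : G.dist w c ≤ ρ := by rw [SimpleGraph.dist_comm]; exact hcB w hwB
        omega
end

section
/- Let G be a graph isometrically embedded in a Helly graph H such that every vertex of H is within distance α of some vertex of G. Then G is α-weakly-Helly. -/
open SimpleGraph

variable {V : Type*}

/-- If G embeds isometrically (via φ) into a Helly graph H such that every vertex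
of H is within distance α of the image of G, then G is α-weakly-Helly. -/
theorem weaklyHelly_of_close_embedding [Fintype V] {W : Type*} [Fintype W]
    (G : SimpleGraph V) (H : SimpleGraph W) (hcG : G.Connected) (hcH : H.Connected)
    (hH : WeaklyHelly H 0) (φ : V → W)
    (hiso : ∀ x y : V, H.dist (φ x) (φ y) = G.dist x y)
    (α : ℕ) (hcov : ∀ h : W, ∃ v : V, H.dist h (φ v) ≤ α) :
    WeaklyHelly G α := by
  intro S r hr
  let r' : W → ℕ := fun w => sInf (r '' {v | v ∈ S ∧ φ v = w})
  have key : ∀ w ∈ φ '' S, ∃ v, v ∈ S ∧ φ v = w ∧ r v = r' w := by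
    rintro w ⟨a, ha, rfl⟩
    have hne : (r '' {v | v ∈ S ∧ φ v = φ a}).Nonempty := ⟨r a, a, ⟨ha, rfl⟩, rfl⟩
    obtain ⟨v, hv, hrv⟩ := Nat.sInf_mem hne
    exact ⟨v, hv.1, hv.2, hrv⟩
  obtain ⟨c', hc'⟩ := hH (φ '' S) r' (by
    rintro x hx y hy
    obtain ⟨a, ha, hfa, hra⟩ := key x hx
    obtain ⟨b, hb, hfb, hrb⟩ := key y hy
    subst hfa hfb
    rw [hiso]
    have := hr a ha b hb
    omega)
  obtain ⟨c, hc⟩ := hcov c'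
  refine ⟨c, fun v hv => ?_⟩
  have h1 : H.dist (φ v) c' ≤ r' (φ v) + 0 := hc' (φ v) ⟨v, hv, rfl⟩
  have h2 : r' (φ v) ≤ r v := Nat.sInf_le ⟨v, ⟨hv, rfl⟩, rfl⟩
  calc G.dist v c = H.dist (φ v) (φ c) := (hiso v c).symm
    _ ≤ H.dist (φ v) c' + H.dist c' (φ c) := hcH.dist_triangle
    _ ≤ r v + α := by omega
end

section
/- Let H be a Helly graph, G an isometric subgraph of H, and suppose G is α-weakly-Helly. Further suppose every vertex h of H satisfies: for all x,y ∈ V(G), d_H(h,x)+d_H(h,y) ≥ d_G(x,y), and for all x ∈ V(G) there exists y ∈ V(G) with d_H(h,x)+d_H(h,y) = d_G(x,y). Then every such vertex h is within distance α of some vertex of G. -/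
open SimpleGraph

variable {V : Type*}

/-- Converse direction of the injective-hull characterization: if G is
α-weakly-Helly and h is a vertex of the Helly graph H ⊇ G whose distance vector
to G satisfies the tight-span conditions, then h is within distance α of some
vertex of G. -/
theorem close_real_vertex_of_weaklyHelly [Fintype V] {W : Type*} [Fintype W]
    (G : SimpleGraph V) (H : SimpleGraph W) (hcG : G.Connected) (hcH : H.Connected)
    (hH : WeaklyHelly H 0) (φ : V → W)
    (hiso : ∀ x y : V, H.dist (φ x) (φ y) = G.dist x y)
    (α : ℕ) (hG : WeaklyHelly G α) (h : W)
    (h1 : ∀ x y : V, G.dist x y ≤ H.dist h (φ x) + H.dist h (φ y))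
    (h2 : ∀ x : V, ∃ y : V, H.dist h (φ x) + H.dist h (φ y) = G.dist x y) :
    ∃ v : V, H.dist h (φ v) ≤ α := by
  obtain ⟨c, hc⟩ := hG Set.univ (fun x => H.dist h (φ x))
    (fun x _ y _ => h1 x y)
  obtain ⟨y, hy⟩ := h2 c
  have hyc := hc y (Set.mem_univ y)
  rw [G.dist_comm] at hyc
  exact ⟨c, by omega⟩
end

section
/- In any graph G, if u and v both lie on shortest paths between x and y at the same distance from x (i.e., u,v ∈ S_k(x,y)), then d(u,v) ≤ 2δ(G), where δ(G) is the Gromov hyperbolicity of G. Hence κ(G) ≤ 2δ(G). -/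
open SimpleGraph

variable {V : Type*}

/-- If G is δ-hyperbolic (Gromov four-point condition), then any two vertices
lying on shortest (x,y)-paths at the same distance k from x are at distance at
most 2δ from each other; hence the interval thinness κ(G) ≤ 2δ(G). -/
theorem slice_thin_of_hyperbolic [Fintype V] (G : SimpleGraph V) (hc : G.Connected)
    (δ : ℕ)
    (hδ : ∀ a b c d : V, G.dist a b + G.dist c d ≤
      max (G.dist a c + G.dist b d) (G.dist a d + G.dist b c) + 2 * δ)
    (x y u v : V) (k : ℕ)
    (hu1 : G.dist x u = k) (hu2 : G.dist x u + G.dist u y = G.dist x y)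
    (hv1 : G.dist x v = k) (hv2 : G.dist x v + G.dist v y = G.dist x y) :
    G.dist u v ≤ 2 * δ := by
  have h := hδ u v x y
  have e1 : G.dist u x = G.dist x u := G.dist_comm
  have e2 : G.dist v x = G.dist x v := G.dist_comm
  have b1 : G.dist u x + G.dist v y = G.dist x y := by omega
  have b2 : G.dist u y + G.dist v x = G.dist x y := by omega
  rw [b1, b2, max_self] at h
  omega
end

section
/- Let G+x be obtained from a graph G by adding a new vertex x adjacent only to a fixed vertex v ∈ V(G). Then G is α-weakly-Helly if and only if G+x is α-weakly-Helly; in particular the Helly-gap satisfies α(G) = α(G+x). -/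
open SimpleGraph

variable {V : Type*}

/-- The graph G + x obtained by adding a pendant vertex (the value none)
adjacent only to the fixed vertex v of G. -/
def pendant (G : SimpleGraph V) (v : V) : SimpleGraph (Option V) where
  Adj a b :=
    match a, b with
    | some u, some w => G.Adj u w
    | some u, none => u = v
    | none, some w => w = v
    | none, none => False
  symm := by
    constructor
    intro a b h
    match a, b with
    | some u, some w => exact (h : G.Adj u w).symm
    | some u, none => exact h
    | none, some w => exact h
    | none, none => exact h
  loopless := by
    constructor
    intro a h
    match a with
    | some u => exact (G.loopless.irrefl u) h
    | none => exact h


section Pendant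

variable [Fintype V] (G : SimpleGraph V) (v : V)

/-- The inclusion homomorphism from `G` into `pendant G v`. -/
def someHom : G →g pendant G v := ⟨some, fun h => h⟩

lemma pendant_adj_none {u : V} : (pendant G v).Adj (some u) none ↔ u = v := Iff.rfl

lemma pendant_connected (hc : G.Connected) : (pendant G v).Connected := by
  rw [SimpleGraph.connected_iff]
  refine ⟨fun a b => ?_, ⟨none⟩⟩
  have hsome : ∀ u w : V, (pendant G v).Reachable (some u) (some w) := by
    intro u w
    obtain ⟨p⟩ := hc.preconnected u w
    exact ⟨p.map (someHom G v)⟩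
  have hnone : ∀ u : V, (pendant G v).Reachable (some u) none := by
    intro u
    exact (hsome u v).trans ⟨SimpleGraph.Walk.cons (by rfl : (pendant G v).Adj (some v) none) SimpleGraph.Walk.nil⟩
  match a, b with
  | some u, some w => exact hsome u w
  | some u, none => exact hnone u
  | none, some w => exact (hnone w).symm
  | none, none => exact SimpleGraph.Reachable.refl none

lemma pendant_walk_lower (hc : G.Connected) {a b : Option V}
    (p : (pendant G v).Walk a b) : G.dist (a.getD v) (b.getD v) ≤ p.length := by
  induction p with
  | nil => simp
  | @cons x y z h q ih =>
    have h1 : G.dist (x.getD v) (y.getD v) ≤ 1 := by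
      match x, y with
      | some u, some w =>
        have hadj : G.Adj u w := h
        exact SimpleGraph.dist_le hadj.toWalk
      | some u, none => simp [show u = v from h, SimpleGraph.dist_self]
      | none, some w => simp [show w = v from h, SimpleGraph.dist_self]
      | none, none => exact absurd h (by simp [pendant])
    calc G.dist (x.getD v) (z.getD v)
        ≤ G.dist (x.getD v) (y.getD v) + G.dist (y.getD v) (z.getD v) := hc.dist_triangle
      _ ≤ 1 + q.length := Nat.add_le_add h1 ih
      _ = (SimpleGraph.Walk.cons h q).length := by simp [Nat.add_comm]

lemma pendant_dist_some_some (hc : G.Connected) (u w : V) :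
    (pendant G v).dist (some u) (some w) = G.dist u w := by
  refine le_antisymm ?_ ?_
  · obtain ⟨p, hp⟩ := (hc.preconnected u w).exists_walk_length_eq_dist
    calc (pendant G v).dist (some u) (some w) ≤ (p.map (someHom G v)).length :=
          SimpleGraph.dist_le _
      _ = G.dist u w := by simpa using hp
  · obtain ⟨p, hp⟩ :=
      ((pendant_connected G v hc).preconnected (some u) (some w)).exists_walk_length_eq_dist
    have := pendant_walk_lower G v hc p
    simpa [hp] using this

lemma pendant_walk_lower_none_aux (hc : G.Connected) {a b : Option V}
    (p : (pendant G v).Walk a b) : ∀ u : V, a = some u → b = none →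
      G.dist u v + 1 ≤ p.length := by
  induction p with
  | nil =>
    intro u ha hb
    subst ha; exact absurd hb (by simp)
  | @cons x y z h q ih =>
    intro u ha hb
    subst ha; subst hb
    match y with
    | none =>
      have : u = v := h
      subst this
      simp [SimpleGraph.dist_self]
    | some w =>
      have hw : G.dist w v + 1 ≤ q.length := ih w rfl rfl
      have h1 : G.dist u v ≤ 1 + G.dist w v := by
        calc G.dist u v ≤ G.dist u w + G.dist w v := hc.dist_triangle
          _ ≤ 1 + G.dist w v := by
              have hadj : G.Adj u w := h
              have : G.dist u w ≤ 1 := SimpleGraph.dist_le hadj.toWalk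
              omega
      simp only [SimpleGraph.Walk.length_cons]
      omega

lemma pendant_walk_lower_none (hc : G.Connected) {u : V}
    (p : (pendant G v).Walk (some u) none) : G.dist u v + 1 ≤ p.length :=
  pendant_walk_lower_none_aux G v hc p u rfl rfl

lemma pendant_dist_some_none (hc : G.Connected) (u : V) :
    (pendant G v).dist (some u) none = G.dist u v + 1 := by
  refine le_antisymm ?_ ?_
  · obtain ⟨p, hp⟩ := (hc.preconnected u v).exists_walk_length_eq_dist
    have : (pendant G v).dist (some u) none ≤
        ((p.map (someHom G v)).concat (by rfl : (pendant G v).Adj (some v) none)).length :=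
      SimpleGraph.dist_le _
    exact this.trans (le_of_eq ((SimpleGraph.Walk.length_concat _ _).trans
      (by rw [SimpleGraph.Walk.length_map, hp])))
  · obtain ⟨p, hp⟩ :=
      ((pendant_connected G v hc).preconnected (some u) none).exists_walk_length_eq_dist
    rw [← hp]
    exact pendant_walk_lower_none G v hc p

end Pendant

/-- Adding a pendant vertex preserves the α-weakly-Helly property for every α,
and hence preserves the Helly-gap. -/
theorem weaklyHelly_pendant [Fintype V] (G : SimpleGraph V) (hc : G.Connected)
    (v : V) :
    (∀ α : ℕ, WeaklyHelly G α ↔ WeaklyHelly (pendant G v) α) ∧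
      hellyGap G = hellyGap (pendant G v) := by
  classical
  have P : (pendant G v).Connected := pendant_connected G v hc
  have dss : ∀ u w : V, (pendant G v).dist (some u) (some w) = G.dist u w :=
    pendant_dist_some_some G v hc
  have dsn : ∀ u : V, (pendant G v).dist (some u) none = G.dist u v + 1 :=
    pendant_dist_some_none G v hc
  have key : ∀ α : ℕ, WeaklyHelly G α ↔ WeaklyHelly (pendant G v) α := by
    intro α
    constructor
    · -- forward direction
      intro h S r hint
      by_cases hn : (none : Option V) ∈ S
      · by_cases h0 : r none = 0
        · -- center at the pendant vertex itself
          refine ⟨none, fun a ha => ?_⟩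
          match a with
          | none => simp [SimpleGraph.dist_self]
          | some u =>
            have := hint (some u) ha none hn
            omega
        · -- r none ≥ 1
          set m : ℕ := if some v ∈ S then min (r (some v)) (r none - 1) else r none - 1 with hm
          have hm_le : m ≤ r none - 1 := by
            by_cases hv : some v ∈ S <;> simp [hm, hv]
          have hbound : ∀ u : V, some u ∈ S → G.dist u v ≤ r (some u) + m := by
            intro u hu
            have h2 : G.dist u v ≤ r (some u) + (r none - 1) := by
              have := hint (some u) hu none hn
              rw [dsn u] at this
              omega
            by_cases hv : some v ∈ S
            · have h1 : G.dist u v ≤ r (some u) + r (some v) := by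
                have := hint (some u) hu (some v) hv
                rwa [dss u v] at this
              simp only [hm, hv, if_true]
              omega
            · simp only [hm, hv, if_false]
              exact h2
          set S' : Set V := {u | some u ∈ S ∨ u = v} with hS'
          set r' : V → ℕ := fun u => if u = v then m else r (some u) with hr'
          have hint' : ∀ x ∈ S', ∀ y ∈ S', G.dist x y ≤ r' x + r' y := by
            intro x hx y hy
            by_cases hxv : x = v <;> by_cases hyv : y = v
            · subst hxv; subst hyv; simp [SimpleGraph.dist_self]
            · subst hxv
              rcases hy with hy | hy
              · have := hbound y hy
                rw [SimpleGraph.dist_comm]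
                simp only [hr', if_pos rfl, if_neg hyv]
                omega
              · exact absurd hy hyv
            · subst hyv
              rcases hx with hx | hx
              · have := hbound x hx
                simp only [hr', if_pos rfl, if_neg hxv]
                omega
              · exact absurd hx hxv
            · rcases hx with hx | hx
              · rcases hy with hy | hy
                · have := hint (some x) hx (some y) hy
                  rw [dss x y] at this
                  simpa [hr', hxv, hyv] using this
                · exact absurd hy hyv
              · exact absurd hx hxv
          obtain ⟨c, hcgood⟩ := h S' r' hint'
          refine ⟨some c, fun a ha => ?_⟩
          match a with
          | none =>
            have hvS' : v ∈ S' := Or.inr rfl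
            have := hcgood v hvS'
            rw [SimpleGraph.dist_comm, dsn c]
            rw [SimpleGraph.dist_comm] at this
            simp only [hr', if_pos rfl] at this
            omega
          | some u =>
            have huS' : u ∈ S' := Or.inl ha
            have := hcgood u huS'
            rw [dss u c]
            by_cases huv : u = v
            · rw [huv] at ha ⊢
              have hgd := hcgood v (Or.inr rfl)
              simp only [hr', if_pos rfl] at hgd
              have hmv : m ≤ r (some v) := by simp [hm, ha]
              omega
            · simpa [hr', huv] using this
      · -- none ∉ S : all centers are in G
        have hint' : ∀ x ∈ {u | some u ∈ S}, ∀ y ∈ {u | some u ∈ S},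
            G.dist x y ≤ r (some x) + r (some y) := by
          intro x hx y hy
          have := hint (some x) hx (some y) hy
          rwa [dss x y] at this
        obtain ⟨c, hcgood⟩ := h {u | some u ∈ S} (fun u => r (some u)) hint'
        refine ⟨some c, fun a ha => ?_⟩
        match a with
        | none => exact absurd ha hn
        | some u =>
          rw [dss u c]
          exact hcgood u ha
    · -- backward direction
      intro h S r hint
      have hint' : ∀ x ∈ some '' S, ∀ y ∈ some '' S,
          (pendant G v).dist x y ≤ (x.elim 0 r : ℕ) + y.elim 0 r := by
        rintro x ⟨u, hu, rfl⟩ y ⟨w, hw, rfl⟩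
        have := hint u hu w hw
        rw [dss u w]
        simpa using this
      obtain ⟨c', hcgood⟩ := h (some '' S) (fun a => a.elim 0 r) hint'
      match c' with
      | some c =>
        refine ⟨c, fun u hu => ?_⟩
        have := hcgood (some u) ⟨u, hu, rfl⟩
        rwa [dss u c] at this
      | none =>
        refine ⟨v, fun u hu => ?_⟩
        have := hcgood (some u) ⟨u, hu, rfl⟩
        rw [dsn u] at this
        simp only [Option.elim] at this
        omega
  refine ⟨key, ?_⟩
  unfold hellyGap
  congr 1
  ext α
  exact key α
end

section
/- In a Helly graph G, for any M ⊆ V(G), 2·rad_G(M) − 1 ≤ diam_G(M) ≤ 2·rad_G(M); equivalently rad_G(M) = ⌈diam_G(M)/2⌉. -/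
open SimpleGraph

variable {V : Type*}

/-- In a Helly graph, 2 rad_G(M) - 1 ≤ diam_G(M) ≤ 2 rad_G(M); equivalently
rad_G(M) = ⌈diam_G(M)/2⌉ = (diam_G(M)+1)/2. -/
theorem helly_diam_rad [Fintype V] (G : SimpleGraph V) (hc : G.Connected)
    (hH : WeaklyHelly G 0) (M : Set V) (hM : M.Nonempty) :
    2 * radM G M ≤ diamS G M + 1 ∧ diamS G M ≤ 2 * radM G M ∧
      radM G M = (diamS G M + 1) / 2 := by
  classical
  set D := diamS G M with hD
  set R := radM G M with hR
  have hV : Nonempty V := ⟨hM.choose⟩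
  -- basic facts about eccM
  have hbdd : ∀ v : V, BddAbove ((G.dist v) '' M) := fun v => (M.toFinite.image _).bddAbove
  have dist_le_eccM : ∀ v : V, ∀ u ∈ M, G.dist v u ≤ eccM G M v := fun v u hu =>
    le_csSup (hbdd v) ⟨u, hu, rfl⟩
  have eccM_le : ∀ (v : V) (n : ℕ), (∀ u ∈ M, G.dist v u ≤ n) → eccM G M v ≤ n := by
    intro v n h
    exact csSup_le (hM.image _) (by rintro _ ⟨u, hu, rfl⟩; exact h u hu)
  -- facts about diamS
  have hdfin : {d | ∃ u ∈ M, ∃ v ∈ M, d = G.dist u v}.Finite := by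
    apply (Set.finite_range (fun p : V × V => G.dist p.1 p.2)).subset
    rintro d ⟨u, _, v, _, rfl⟩
    exact ⟨(u, v), rfl⟩
  have dist_le_diamS : ∀ u ∈ M, ∀ v ∈ M, G.dist u v ≤ D := fun u hu v hv =>
    le_csSup hdfin.bddAbove ⟨u, hu, v, hv, rfl⟩
  -- a center attaining radM
  obtain ⟨c, hc'⟩ : ∃ c : V, eccM G M c = R := by
    have := Nat.sInf_mem (Set.range_nonempty (eccM G M))
    exact this
  -- D ≤ 2R
  have hD2R : D ≤ 2 * R := by
    apply csSup_le
    · obtain ⟨u, hu⟩ := hM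
      exact ⟨G.dist u u, u, hu, u, hu, rfl⟩
    · rintro _ ⟨u, hu, v, hv, rfl⟩
      calc G.dist u v ≤ G.dist u c + G.dist c v := hc.dist_triangle
        _ = G.dist c u + G.dist c v := by rw [SimpleGraph.dist_comm (G := G) (u := u) (v := c)]
        _ ≤ eccM G M c + eccM G M c := add_le_add (dist_le_eccM c u hu) (dist_le_eccM c v hv)
        _ = 2 * R := by rw [hc']; ring
  -- R ≤ (D+1)/2 via Helly
  have hRle : R ≤ (D + 1) / 2 := by
    obtain ⟨z, hz⟩ := hH M (fun _ => (D + 1) / 2) (by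
      intro x hx y hy
      have h1 := dist_le_diamS x hx y hy
      show G.dist x y ≤ (D + 1) / 2 + (D + 1) / 2
      omega)
    have : eccM G M z ≤ (D + 1) / 2 := by
      apply eccM_le
      intro u hu
      have := hz u hu
      rwa [SimpleGraph.dist_comm, Nat.add_zero] at this
    exact le_trans (Nat.sInf_le ⟨z, rfl⟩) this
  refine ⟨by omega, hD2R, by omega⟩
end
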